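/- Let n ≥ 1 and d ≥ 1 be integers and M > 0 a real number. Let φ : ℝⁿ → ℝ be continuous with 0 ≤ φ(x) ≤ C₀·(1 + ‖x‖₂^{d−1}) for some constant C₀ ≥ 0 and all x in the nonnegative orthant ℝⁿ₊, and let g₁, …, g_m : ℝⁿ → ℝ be continuous functions with |g_i(x)| ≤ C_i·(1 + ‖x‖₂^{d−1}) on ℝⁿ₊ for constants C_i ≥ 0, and let q₁, …, q_m ∈ ℝ. Let F be the set of Borel probability measures μ on ℝⁿ that are supported in ℝⁿ₊ and satisfy ∫ g_i dμ = q_i for all i ∈ {1,…,m} and ∫ ‖x‖₂^d dμ ≤ M. If F is nonempty, then there exists μ* ∈ F with ∫ φ dμ* = inf { ∫ φ dμ : μ ∈ F }, i.e. the infimum is attained. -/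

import Mathlib

open MeasureTheory Filter Topology

set_option maxHeartbeats 8000000

/-- Escaping atoms vanish: if weights times `d`-th powers stay bounded and the radii blow up,
then the weights and the weighted growth-`d-1` contributions tend to zero. -/
theorem gmp_vanish_aux {d : ℕ} (hd : 1 ≤ d) {M' : ℝ} (a t : ℕ → ℝ)
    (ha : ∀ k, 0 ≤ a k) (ht0 : ∀ k, 0 ≤ t k)
    (hb : ∀ k, a k * t k ^ d ≤ M') (ht : Tendsto t atTop atTop) :
    Tendsto a atTop (𝓝 0) ∧
      ∀ c : ℝ, 0 ≤ c → Tendsto (fun k => a k * (c * (1 + t k ^ (d-1)))) atTop (𝓝 0) := by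
  have hM' : 0 ≤ M' := le_trans (mul_nonneg (ha 0) (pow_nonneg (ht0 0) d)) (hb 0)
  have hinv : Tendsto (fun k => M' / t k) atTop (𝓝 0) := by
    simpa [div_eq_mul_inv] using ht.inv_tendsto_atTop.const_mul M'
  have hev : ∀ᶠ k in atTop, 1 ≤ t k := ht.eventually_ge_atTop 1
  have key : ∀ᶠ k in atTop, a k * t k ^ (d-1) ≤ M' / t k := by
    filter_upwards [hev] with k hk
    have htk : 0 < t k := lt_of_lt_of_le one_pos hk
    rw [le_div_iff₀ htk]
    calc a k * t k ^ (d-1) * t k = a k * t k ^ d := by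
          rw [mul_assoc, ← pow_succ]; congr 2; omega
      _ ≤ M' := hb k
  have ha0 : Tendsto a atTop (𝓝 0) := by
    apply squeeze_zero' (Eventually.of_forall ha) _ hinv
    filter_upwards [hev, key] with k hk hkey
    have h1 : 1 ≤ t k ^ (d-1) := one_le_pow₀ hk
    nlinarith [ha k]
  refine ⟨ha0, fun c hc => ?_⟩
  have hcomb : Tendsto (fun k => c * a k + c * (M' / t k)) atTop (𝓝 0) := by
    have := (ha0.const_mul c).add (hinv.const_mul c)
    simpa using this
  apply squeeze_zero'
    (Eventually.of_forall fun k =>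
      mul_nonneg (ha k) (mul_nonneg hc (by nlinarith [pow_nonneg (ht0 k) (d-1)]))) _ hcomb
  filter_upwards [key] with k hkey
  have := ha k
  nlinarith

/-- Summing a padded family over `Fin K` equals summing the original family. -/
theorem gmp_padded_sum {ι : Type} [Fintype ι] {K : ℕ} (hlK : Fintype.card ι ≤ K)
    (e : ι ≃ Fin (Fintype.card ι)) (H : ι → ℝ)
    (h : Fin K → ℝ)
    (hh : ∀ j : Fin K, h j = if hj : (j : ℕ) < Fintype.card ι then H (e.symm ⟨j, hj⟩) else 0) :
    ∑ j : Fin K, h j = ∑ i : ι, H i := by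
  classical
  rw [← Finset.sum_filter_of_ne (p := fun j : Fin K => (j : ℕ) < Fintype.card ι)
    (by intro x _ hx; by_contra hc; rw [hh x, dif_neg hc] at hx; exact hx rfl)]
  refine Finset.sum_bij' (i := fun j hj => e.symm ⟨(j : ℕ), (Finset.mem_filter.mp hj).2⟩)
    (j := fun i _ => Fin.castLE hlK (e i)) ?_ ?_ ?_ ?_ ?_
  · intro a ha; exact Finset.mem_univ _
  · intro i _
    refine Finset.mem_filter.mpr ⟨Finset.mem_univ _, ?_⟩
    simp
  · intro a ha
    apply Fin.ext
    simp
  · intro i _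
    simp
  · intro a ha
    rw [hh a, dif_pos (Finset.mem_filter.mp ha).2]

/-- Integrability from polynomial growth of order `d-1` plus a `d`-th moment bound. -/
theorem gmp_integrable_growth {X : Type*} [MeasurableSpace X] [TopologicalSpace X] [BorelSpace X]
    [TopologicalSpace.PseudoMetrizableSpace X] [SecondCountableTopology X]
    (μ : Measure X) [IsProbabilityMeasure μ] (d : ℕ) (hd : 1 ≤ d) (A : Set X)
    (hA : ∀ᵐ x ∂μ, x ∈ A) (nrm : X → ℝ) (hnn : ∀ x, 0 ≤ nrm x)
    (hint : Integrable (fun x => nrm x ^ d) μ)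
    {W : Type*} [NormedAddCommGroup W] (f : X → W) (hf : Continuous f) (c : ℝ) (hc : 0 ≤ c)
    (hb : ∀ x ∈ A, ‖f x‖ ≤ c * (1 + nrm x ^ (d-1))) :
    Integrable f μ := by
  have hbd : Integrable (fun x => c * (2 + nrm x ^ d)) μ :=
    ((integrable_const (2:ℝ)).add hint).const_mul c
  refine Integrable.mono' hbd hf.aestronglyMeasurable ?_
  filter_upwards [hA] with x hx
  refine (hb x hx).trans ?_
  have h1 : nrm x ^ (d-1) ≤ 1 + nrm x ^ d := by
    rcases le_or_gt (nrm x) 1 with h | h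
    · have h0 := pow_le_one₀ (hnn x) h (n := d - 1)
      have := pow_nonneg (hnn x) d
      linarith
    · have h2 : nrm x ^ (d-1) ≤ nrm x ^ d := pow_le_pow_right₀ h.le (by omega)
      linarith
  nlinarith

/-- Any continuous function is integrable with respect to a Dirac measure. -/
theorem gmp_integrable_dirac {X : Type*} [MeasurableSpace X] [TopologicalSpace X] [BorelSpace X]
    [TopologicalSpace.PseudoMetrizableSpace X]
    (f : X → ℝ) (hf : Continuous f) (x : X) : Integrable f (Measure.dirac x) := by
  refine ⟨hf.aestronglyMeasurable, ?_⟩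
  rw [HasFiniteIntegral, lintegral_dirac' _ (hf.measurable.enorm)]
  exact enorm_lt_top

/-- Minimization half of Lemma 3: the infimum of the option-pricing GMP is attained. -/
theorem gmp_infimum_attained
    (n d : ℕ) (hn : 1 ≤ n) (hd : 1 ≤ d) (M : ℝ) (hM : 0 < M)
    (φ : EuclideanSpace ℝ (Fin n) → ℝ) (hφc : Continuous φ)
    (C₀ : ℝ) (hC₀ : 0 ≤ C₀)
    (hφ : ∀ x : EuclideanSpace ℝ (Fin n), (∀ i, 0 ≤ x i) →
        0 ≤ φ x ∧ φ x ≤ C₀ * (1 + ‖x‖ ^ (d - 1)))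
    (m : ℕ) (g : Fin m → EuclideanSpace ℝ (Fin n) → ℝ) (hgc : ∀ i, Continuous (g i))
    (C : Fin m → ℝ) (hC : ∀ i, 0 ≤ C i)
    (hg : ∀ i, ∀ x : EuclideanSpace ℝ (Fin n), (∀ j, 0 ≤ x j) →
        |g i x| ≤ C i * (1 + ‖x‖ ^ (d - 1)))
    (q : Fin m → ℝ)
    (F : Set (Measure (EuclideanSpace ℝ (Fin n))))
    (hF : F = {μ | IsProbabilityMeasure μ ∧
        μ {x | ¬ ∀ i, 0 ≤ x i} = 0 ∧
        (∀ i, Integrable (g i) μ ∧ ∫ x, g i x ∂μ = q i) ∧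
        Integrable (fun x => ‖x‖ ^ d) μ ∧ ∫ x, ‖x‖ ^ d ∂μ ≤ M})
    (hne : F.Nonempty) :
    ∃ μ ∈ F, ∫ x, φ x ∂μ = sInf ((fun ν => ∫ x, φ x ∂ν) '' F) := by
  classical
  subst hF
  set A : Set (EuclideanSpace ℝ (Fin n)) := {x | ∀ i, 0 ≤ x i} with hA
  have hAclosed : IsClosed A := by
    have : A = ⋂ i, (fun x : EuclideanSpace ℝ (Fin n) => x i) ⁻¹' (Set.Ici 0) := by
      ext x; simp [hA, Set.mem_iInter]
    rw [this]
    exact isClosed_iInter fun i => isClosed_Ici.preimage (EuclideanSpace.proj i).continuous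
  have h0A : (0 : EuclideanSpace ℝ (Fin n)) ∈ A := fun i => le_refl 0
  -- a.e. membership in the orthant
  have h_ae : ∀ μ : Measure (EuclideanSpace ℝ (Fin n)), μ {x | ¬ ∀ i, 0 ≤ x i} = 0 →
      ∀ᵐ x ∂μ, x ∈ A := by
    intro μ hμ
    exact ae_iff.mpr hμ
  -- the moment-curve map
  set K := m + 3 with hK
  set γ : EuclideanSpace ℝ (Fin n) → (Fin m → ℝ) × ℝ × ℝ :=
    fun x => (fun i => g i x, ‖x‖ ^ d, φ x) with hγ
  have hγc : Continuous γ := by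
    refine Continuous.prodMk (continuous_pi hgc) (Continuous.prodMk ?_ hφc)
    exact continuous_norm.pow d
  -- component functionals
  set Lg : Fin m → ((Fin m → ℝ) × ℝ × ℝ →L[ℝ] ℝ) := fun i =>
    (ContinuousLinearMap.proj i).comp (ContinuousLinearMap.fst ℝ (Fin m → ℝ) (ℝ × ℝ)) with hLg
  set LN : ((Fin m → ℝ) × ℝ × ℝ →L[ℝ] ℝ) :=
    (ContinuousLinearMap.fst ℝ ℝ ℝ).comp (ContinuousLinearMap.snd ℝ (Fin m → ℝ) (ℝ × ℝ)) with hLN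
  set Lφ : ((Fin m → ℝ) × ℝ × ℝ →L[ℝ] ℝ) :=
    (ContinuousLinearMap.snd ℝ ℝ ℝ).comp (ContinuousLinearMap.snd ℝ (Fin m → ℝ) (ℝ × ℝ)) with hLφ
  have hLgb : ∀ i e, |Lg i e| ≤ ‖e‖ := by
    intro i e
    have h1 : |e.1 i| ≤ ‖e.1‖ := by simpa using norm_le_pi_norm e.1 i
    exact h1.trans (norm_fst_le e)
  have hLNb : ∀ e : (Fin m → ℝ) × ℝ × ℝ, |LN e| ≤ ‖e‖ := by
    intro e
    have h1 : |e.2.1| ≤ ‖e.2‖ := by simpa using norm_fst_le e.2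
    exact h1.trans (norm_snd_le e)
  have hLφb : ∀ e : (Fin m → ℝ) × ℝ × ℝ, |Lφ e| ≤ ‖e‖ := by
    intro e
    have h1 : |e.2.2| ≤ ‖e.2‖ := by simpa using norm_snd_le e.2
    exact h1.trans (norm_snd_le e)
  -- Step 1 + 2: atomic approximation of any feasible measure
  have key : ∀ μ : Measure (EuclideanSpace ℝ (Fin n)), IsProbabilityMeasure μ →
      (∀ᵐ x ∂μ, x ∈ A) → (∀ i, Integrable (g i) μ ∧ ∫ x, g i x ∂μ = q i) →
      Integrable (fun x => ‖x‖ ^ d) μ → (∫ x, ‖x‖ ^ d ∂μ) ≤ M →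
      ∀ ε : ℝ, 0 < ε →
      ∃ (lam : Fin K → ℝ) (xx : Fin K → EuclideanSpace ℝ (Fin n)),
        (∀ j, 0 ≤ lam j) ∧ (∀ j, xx j ∈ A) ∧ (∑ j, lam j) = 1 ∧
        (∀ i, |(∑ j, lam j * g i (xx j)) - q i| ≤ ε) ∧
        (∑ j, lam j * ‖xx j‖ ^ d) ≤ M + ε ∧
        (∑ j, lam j * φ (xx j)) ≤ (∫ x, φ x ∂μ) + ε := by
    intro μ hμp hae hgi hNint hNM ε hε
    haveI := hμp
    -- integrability of the moment curve
    have hγint : Integrable γ μ := by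
      refine Integrable.prodMk ?_ (Integrable.prodMk hNint ?_)
      · refine gmp_integrable_growth μ d hd A hae (fun x => ‖x‖) (fun x => norm_nonneg x)
          hNint _ (continuous_pi hgc) (∑ i, C i)
          (Finset.sum_nonneg fun i _ => hC i) ?_
        intro x hx
        have hnn : (0:ℝ) ≤ 1 + ‖x‖ ^ (d-1) := by positivity
        rw [pi_norm_le_iff_of_nonneg (mul_nonneg (Finset.sum_nonneg fun i _ => hC i) hnn)]
        intro i
        calc ‖g i x‖ ≤ C i * (1 + ‖x‖ ^ (d-1)) := by
              simpa [Real.norm_eq_abs] using hg i x hx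
          _ ≤ (∑ i, C i) * (1 + ‖x‖ ^ (d-1)) := by
              have : C i ≤ ∑ i, C i :=
                Finset.single_le_sum (fun i _ => hC i) (Finset.mem_univ i)
              nlinarith
      · refine gmp_integrable_growth μ d hd A hae (fun x => ‖x‖) (fun x => norm_nonneg x)
          hNint _ hφc C₀ hC₀ ?_
        intro x hx
        rw [Real.norm_eq_abs, abs_of_nonneg (hφ x hx).1]
        exact (hφ x hx).2
    -- Jensen: the moment vector lies in the closed convex hull of the moment curve
    have hmem : (∫ x, γ x ∂μ) ∈ closure (convexHull ℝ (γ '' A)) := by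
      refine (convex_convexHull ℝ _).closure.integral_mem isClosed_closure ?_ hγint
      filter_upwards [hae] with x hx
      exact subset_closure (subset_convexHull ℝ _ ⟨x, hx, rfl⟩)
    obtain ⟨c, hc, hcd⟩ := Metric.mem_closure_iff.mp hmem ε hε
    -- components of `c` are `ε`-close to the moments
    have hcomp : ∀ L : ((Fin m → ℝ) × ℝ × ℝ) →L[ℝ] ℝ, (∀ e, |L e| ≤ ‖e‖) →
        |L c - ∫ x, L (γ x) ∂μ| ≤ ε := by
      intro L hLb
      rw [L.integral_comp_comm hγint, ← map_sub]
      refine (hLb _).trans ?_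
      rw [← dist_eq_norm]
      rw [dist_comm]
      exact hcd.le
    -- Carathéodory
    obtain ⟨ι, hfin, z, w, hzr, hai, hwpos, hw1, hsum⟩ :=
      eq_pos_convex_span_of_mem_convexHull hc
    letI := hfin
    have hfinrank : Module.finrank ℝ ((Fin m → ℝ) × ℝ × ℝ) = m + 2 := by
      simp [Module.finrank_prod, Module.finrank_pi]
    have hcard : Fintype.card ι ≤ K := by
      have h1 := hai.card_le_finrank_succ
      have h2 := Submodule.finrank_le (vectorSpan ℝ (Set.range z))
      rw [hfinrank] at h2
      omega
    choose ξ hξA hξγ using fun i => hzr (Set.mem_range_self i)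
    set e := Fintype.equivFin ι with he
    set lam : Fin K → ℝ :=
      fun j => if hj : (j : ℕ) < Fintype.card ι then w (e.symm ⟨j, hj⟩) else 0 with hlam
    set xx : Fin K → EuclideanSpace ℝ (Fin n) :=
      fun j => if hj : (j : ℕ) < Fintype.card ι then ξ (e.symm ⟨j, hj⟩) else 0 with hxx
    have hsums : ∀ f : EuclideanSpace ℝ (Fin n) → ℝ,
        (∑ j : Fin K, lam j * f (xx j)) = ∑ i : ι, w i * f (ξ i) := by
      intro f
      refine gmp_padded_sum hcard e (fun i => w i * f (ξ i)) _ ?_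
      intro j
      by_cases hj : (j : ℕ) < Fintype.card ι
      · rw [hlam, hxx]; simp only [dif_pos hj]
      · rw [hlam, hxx]; simp only [dif_neg hj, zero_mul]
    -- any linear functional of `c` equals the corresponding atomic sum
    have hLc : ∀ L : ((Fin m → ℝ) × ℝ × ℝ) →L[ℝ] ℝ,
        L c = ∑ j : Fin K, lam j * L (γ (xx j)) := by
      intro L
      rw [hsums (fun x => L (γ x)), ← hsum, map_sum]
      refine Finset.sum_congr rfl fun i _ => ?_
      rw [_root_.map_smul, smul_eq_mul, hξγ i]
    refine ⟨lam, xx, ?_, ?_, ?_, ?_, ?_, ?_⟩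
    · intro j
      rw [hlam]
      by_cases hj : (j : ℕ) < Fintype.card ι
      · simp only [dif_pos hj]; exact (hwpos _).le
      · simp only [dif_neg hj]; exact le_refl 0
    · intro j
      rw [hxx]
      by_cases hj : (j : ℕ) < Fintype.card ι
      · simp only [dif_pos hj]; exact hξA _
      · simp only [dif_neg hj]; exact h0A
    · have := hsums (fun _ => 1)
      simpa [hw1] using this
    · intro i
      have h1 : (∑ j, lam j * g i (xx j)) = Lg i c := by
        rw [hLc (Lg i)]; rfl
      have h2 : (∫ x, (Lg i) (γ x) ∂μ) = q i := by
        have : (fun x => (Lg i) (γ x)) = fun x => g i x := rfl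
        rw [this]; exact (hgi i).2
      rw [h1, ← h2]
      exact hcomp (Lg i) (hLgb i)
    · have h1 : (∑ j, lam j * ‖xx j‖ ^ d) = LN c := by
        rw [hLc LN]; rfl
      have h2 : (∫ x, LN (γ x) ∂μ) = ∫ x, ‖x‖ ^ d ∂μ := rfl
      have h3 := hcomp LN hLNb
      rw [h2] at h3
      rw [h1]
      have := abs_sub_le_iff.mp h3
      linarith [this.1]
    · have h1 : (∑ j, lam j * φ (xx j)) = Lφ c := by
        rw [hLc Lφ]; rfl
      have h2 : (∫ x, Lφ (γ x) ∂μ) = ∫ x, φ x ∂μ := rfl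
      have h3 := hcomp Lφ hLφb
      rw [h2] at h3
      rw [h1]
      have := abs_sub_le_iff.mp h3
      linarith [this.1]
  -- name the feasible set and the optimal value
  set Fs : Set (Measure (EuclideanSpace ℝ (Fin n))) := {μ | IsProbabilityMeasure μ ∧
      μ {x | ¬ ∀ i, 0 ≤ x i} = 0 ∧
      (∀ i, Integrable (g i) μ ∧ ∫ x, g i x ∂μ = q i) ∧
      Integrable (fun x => ‖x‖ ^ d) μ ∧ ∫ x, ‖x‖ ^ d ∂μ ≤ M} with hFs
  have hlb : ∀ y ∈ (fun ν : Measure (EuclideanSpace ℝ (Fin n)) => ∫ x, φ x ∂ν) '' Fs, 0 ≤ y := by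
    rintro y ⟨μ, hμ, rfl⟩
    rw [hFs] at hμ
    obtain ⟨hp, hnull, -, -, -⟩ := hμ
    refine integral_nonneg_of_ae ?_
    filter_upwards [h_ae μ hnull] with x hx
    exact (hφ x hx).1
  have hSne : ((fun ν : Measure (EuclideanSpace ℝ (Fin n)) => ∫ x, φ x ∂ν) '' Fs).Nonempty :=
    hne.image _
  have hSbdd : BddBelow ((fun ν : Measure (EuclideanSpace ℝ (Fin n)) => ∫ x, φ x ∂ν) '' Fs) :=
    ⟨0, fun y hy => hlb y hy⟩
  set a := sInf ((fun ν : Measure (EuclideanSpace ℝ (Fin n)) => ∫ x, φ x ∂ν) '' Fs) with ha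
  -- minimizing sequence of atomic approximations
  have hminseq : ∀ k : ℕ, ∃ (lam : Fin K → ℝ) (xx : Fin K → EuclideanSpace ℝ (Fin n)),
      (∀ j, 0 ≤ lam j) ∧ (∀ j, xx j ∈ A) ∧ (∑ j, lam j) = 1 ∧
      (∀ i, |(∑ j, lam j * g i (xx j)) - q i| ≤ 1/((k:ℝ)+1)) ∧
      (∑ j, lam j * ‖xx j‖ ^ d) ≤ M + 1/((k:ℝ)+1) ∧
      (∑ j, lam j * φ (xx j)) ≤ a + 2/((k:ℝ)+1) := by
    intro k
    have hkpos : (0:ℝ) < 1/((k:ℝ)+1) := by positivity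
    obtain ⟨y, ⟨μk, hμkF, rfl⟩, hy⟩ := Real.lt_sInf_add_pos hSne hkpos
    rw [hFs] at hμkF
    obtain ⟨hp, hnull, hgs, hNi, hNM⟩ := hμkF
    obtain ⟨lam, xx, p1, p2, p3, p4, p5, p6⟩ :=
      key μk hp (h_ae μk hnull) hgs hNi hNM (1/((k:ℝ)+1)) hkpos
    refine ⟨lam, xx, p1, p2, p3, p4, p5, ?_⟩
    have h2 : (2:ℝ)/((k:ℝ)+1) = 1/((k:ℝ)+1) + 1/((k:ℝ)+1) := by ring
    rw [← ha] at hy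
    linarith
  choose lam xx hp1 hp2 hp3 hp4 hp5 hp6 using hminseq
  -- compactified atom data
  set u : ℕ → Fin K → ℝ × EuclideanSpace ℝ (Fin n) × ℝ :=
    fun k j => (lam k j, (1 + ‖xx k j‖)⁻¹ • xx k j, (1 + ‖xx k j‖)⁻¹) with hu
  have hub : ∀ k, ‖u k‖ ≤ 1 := by
    intro k
    rw [pi_norm_le_iff_of_nonneg zero_le_one]
    intro j
    have ht0 : (0:ℝ) < 1 + ‖xx k j‖ := by positivity
    have hinv0 : (0:ℝ) < (1 + ‖xx k j‖)⁻¹ := inv_pos.mpr ht0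
    have hinv1 : (1 + ‖xx k j‖)⁻¹ ≤ 1 := by
      have h2 : (1 + ‖xx k j‖)⁻¹ * (1 + ‖xx k j‖) = 1 := inv_mul_cancel₀ ht0.ne'
      nlinarith [norm_nonneg (xx k j)]
    rw [hu]
    rw [Prod.norm_def, Prod.norm_def]
    refine max_le ?_ (max_le ?_ ?_)
    · rw [Real.norm_eq_abs, abs_of_nonneg (hp1 k j)]
      calc lam k j ≤ ∑ j', lam k j' :=
            Finset.single_le_sum (fun j' _ => hp1 k j') (Finset.mem_univ j)
        _ = 1 := hp3 k
    · rw [norm_smul, Real.norm_eq_abs, abs_of_pos hinv0]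
      have h2 : (1 + ‖xx k j‖)⁻¹ * (1 + ‖xx k j‖) = 1 := inv_mul_cancel₀ ht0.ne'
      nlinarith [norm_nonneg (xx k j)]
    · rw [Real.norm_eq_abs, abs_of_pos hinv0]
      exact hinv1
  obtain ⟨b, -, ψ, hψ, hconv⟩ := tendsto_subseq_of_bounded (Metric.isBounded_closedBall
    (x := (0 : Fin K → ℝ × EuclideanSpace ℝ (Fin n) × ℝ)) (r := 1))
    (fun k => mem_closedBall_zero_iff.mpr (hub k))
  have hjlim : ∀ j, Tendsto (fun k => u (ψ k) j) atTop (𝓝 (b j)) :=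
    fun j => tendsto_pi_nhds.mp hconv j
  have hLamlim : ∀ j, Tendsto (fun k => lam (ψ k) j) atTop (𝓝 (b j).1) :=
    fun j => (continuous_fst.tendsto _).comp (hjlim j)
  have hylim : ∀ j, Tendsto (fun k => (1 + ‖xx (ψ k) j‖)⁻¹ • xx (ψ k) j) atTop (𝓝 (b j).2.1) :=
    fun j => ((continuous_fst.comp continuous_snd).tendsto _).comp (hjlim j)
  have hrlim : ∀ j, Tendsto (fun k => (1 + ‖xx (ψ k) j‖)⁻¹) atTop (𝓝 (b j).2.2) :=
    fun j => ((continuous_snd.comp continuous_snd).tendsto _).comp (hjlim j)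
  have hΛnn : ∀ j, 0 ≤ (b j).1 :=
    fun j => ge_of_tendsto (hLamlim j) (Eventually.of_forall fun k => hp1 _ j)
  set P : Finset (Fin K) := Finset.univ.filter (fun j => (b j).2.2 ≠ 0) with hP
  set xs : Fin K → EuclideanSpace ℝ (Fin n) := fun j => ((b j).2.2)⁻¹ • (b j).2.1 with hxs
  -- atoms indexed by P converge
  have hxconv : ∀ j ∈ P, Tendsto (fun k => xx (ψ k) j) atTop (𝓝 (xs j)) := by
    intro j hj
    have hRj : (b j).2.2 ≠ 0 := (Finset.mem_filter.mp hj).2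
    have h1 : Tendsto (fun k => ((1 + ‖xx (ψ k) j‖)⁻¹)⁻¹ • ((1 + ‖xx (ψ k) j‖)⁻¹ • xx (ψ k) j))
        atTop (𝓝 (((b j).2.2)⁻¹ • (b j).2.1)) :=
      Tendsto.smul ((hrlim j).inv₀ hRj) (hylim j)
    have heq : ∀ k, ((1 + ‖xx (ψ k) j‖)⁻¹)⁻¹ • ((1 + ‖xx (ψ k) j‖)⁻¹ • xx (ψ k) j) = xx (ψ k) j := by
      intro k
      have ht0 : (0:ℝ) < 1 + ‖xx (ψ k) j‖ := by positivity
      rw [smul_smul, inv_mul_cancel₀ (inv_pos.mpr ht0).ne', one_smul]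
    rw [hxs]
    exact Tendsto.congr heq h1
  -- per-atom moment bound
  have hM1 : ∀ k j, lam k j * ‖xx k j‖ ^ d ≤ M + 1 := by
    intro k j
    have h1 : lam k j * ‖xx k j‖ ^ d ≤ ∑ j', lam k j' * ‖xx k j'‖ ^ d :=
      Finset.single_le_sum (fun j' _ => mul_nonneg (hp1 k j') (pow_nonneg (norm_nonneg _) d))
        (Finset.mem_univ j)
    have h2 : (1:ℝ)/((k:ℝ)+1) ≤ 1 := by
      rw [div_le_one (by positivity)]
      simp
    linarith [hp5 k]
  -- escaping atoms vanish
  have hvan : ∀ j, j ∉ P → Tendsto (fun k => lam (ψ k) j) atTop (𝓝 0) ∧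
      ∀ c : ℝ, 0 ≤ c →
        Tendsto (fun k => lam (ψ k) j * (c * (1 + ‖xx (ψ k) j‖ ^ (d-1)))) atTop (𝓝 0) := by
    intro j hj
    have hRj : (b j).2.2 = 0 := by
      by_contra hc
      exact hj (Finset.mem_filter.mpr ⟨Finset.mem_univ j, hc⟩)
    have hrpos : ∀ k, (0:ℝ) < (1 + ‖xx (ψ k) j‖)⁻¹ := by
      intro k; positivity
    have hinfty : Tendsto (fun k => ‖xx (ψ k) j‖) atTop atTop := by
      have h0 : Tendsto (fun k => (1 + ‖xx (ψ k) j‖)⁻¹) atTop (𝓝[>] 0) := by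
        refine tendsto_nhdsWithin_iff.mpr ⟨?_, Eventually.of_forall fun k => hrpos k⟩
        rw [← hRj]; exact hrlim j
      have h1 : Tendsto (fun k => ((1 + ‖xx (ψ k) j‖)⁻¹)⁻¹) atTop atTop :=
        tendsto_inv_nhdsGT_zero.comp h0
      have h2 : (fun k => ((1 + ‖xx (ψ k) j‖)⁻¹)⁻¹) = fun k => 1 + ‖xx (ψ k) j‖ :=
        funext fun k => inv_inv _
      rw [h2] at h1
      have h3 := tendsto_atTop_add_const_right atTop (-1) h1
      simpa using h3
    exact gmp_vanish_aux hd _ _ (fun k => hp1 _ j) (fun k => norm_nonneg _)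
      (fun k => hM1 (ψ k) j) hinfty
  -- limits of weighted sums for growth-(d-1) functions
  have hsumlim : ∀ f : EuclideanSpace ℝ (Fin n) → ℝ, Continuous f → ∀ c : ℝ, 0 ≤ c →
      (∀ x ∈ A, |f x| ≤ c * (1 + ‖x‖ ^ (d-1))) →
      Tendsto (fun k => ∑ j : Fin K, lam (ψ k) j * f (xx (ψ k) j)) atTop
        (𝓝 (∑ j ∈ P, (b j).1 * f (xs j))) := by
    intro f hfc c hc hfb
    have hsplit : ∀ k, (∑ j : Fin K, lam (ψ k) j * f (xx (ψ k) j)) =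
        (∑ j ∈ P, lam (ψ k) j * f (xx (ψ k) j)) +
          ∑ j ∈ Finset.univ.filter (fun j => ¬ (b j).2.2 ≠ 0), lam (ψ k) j * f (xx (ψ k) j) := by
      intro k
      rw [hP]
      exact (Finset.sum_filter_add_sum_filter_not Finset.univ _ _).symm
    have hT1 : Tendsto (fun k => ∑ j ∈ P, lam (ψ k) j * f (xx (ψ k) j)) atTop
        (𝓝 (∑ j ∈ P, (b j).1 * f (xs j))) :=
      tendsto_finset_sum _ fun j hj => (hLamlim j).mul ((hfc.tendsto _).comp (hxconv j hj))
    have hT2 : Tendsto (fun k => ∑ j ∈ Finset.univ.filter (fun j => ¬ (b j).2.2 ≠ 0),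
        lam (ψ k) j * f (xx (ψ k) j)) atTop (𝓝 0) := by
      have h0 : Tendsto (fun k => ∑ j ∈ Finset.univ.filter (fun j => ¬ (b j).2.2 ≠ 0),
          lam (ψ k) j * f (xx (ψ k) j)) atTop
          (𝓝 (∑ j ∈ Finset.univ.filter (fun j => ¬ (b j).2.2 ≠ 0), (0:ℝ))) := by
        refine tendsto_finset_sum _ fun j hj => ?_
        have hjP : j ∉ P := by
          rw [hP]
          intro hmem
          exact (Finset.mem_filter.mp hj).2 (Finset.mem_filter.mp hmem).2
        refine squeeze_zero_norm (fun k => ?_) ((hvan j hjP).2 c hc)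
        rw [Real.norm_eq_abs, abs_mul, abs_of_nonneg (hp1 _ j)]
        exact mul_le_mul_of_nonneg_left (hfb _ (hp2 _ j)) (hp1 _ j)
      simpa using h0
    have hcomb := hT1.add hT2
    rw [add_zero] at hcomb
    exact Tendsto.congr (fun k => (hsplit k).symm) hcomb
  -- 1/(ψ k + 1) → 0
  have hψ0 : Tendsto (fun k : ℕ => 1/((ψ k : ℝ)+1)) atTop (𝓝 0) := by
    refine squeeze_zero (fun k => by positivity) (fun k => ?_)
      tendsto_one_div_add_atTop_nhds_zero_nat
    have hk : (k:ℝ) ≤ (ψ k : ℝ) := by exact_mod_cast hψ.le_apply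
    apply one_div_le_one_div_of_le (by positivity)
    linarith
  -- total mass of the limit atoms
  have hmass : (∑ j ∈ P, (b j).1) = 1 := by
    have h1 := hsumlim (fun _ => 1) continuous_const 1 zero_le_one
      (fun x hx => by
        rw [abs_one]
        nlinarith [pow_nonneg (norm_nonneg x) (d-1)])
    have h2 : Tendsto (fun k => ∑ j : Fin K, lam (ψ k) j * (1:ℝ)) atTop (𝓝 1) := by
      have heq : ∀ k, (∑ j : Fin K, lam (ψ k) j * (1:ℝ)) = 1 := by
        intro k
        simp only [mul_one]
        exact hp3 (ψ k)
      rw [funext heq]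
      exact tendsto_const_nhds
    have := tendsto_nhds_unique h1 h2
    simpa [mul_one] using this
  -- constraint values of the limit atoms
  have hgstar : ∀ i, (∑ j ∈ P, (b j).1 * g i (xs j)) = q i := by
    intro i
    have h1 := hsumlim (g i) (hgc i) (C i) (hC i) (fun x hx => hg i x hx)
    have h2 : Tendsto (fun k => ∑ j : Fin K, lam (ψ k) j * g i (xx (ψ k) j)) atTop (𝓝 (q i)) := by
      have hz : Tendsto (fun k => (∑ j : Fin K, lam (ψ k) j * g i (xx (ψ k) j)) - q i)
          atTop (𝓝 0) :=
        squeeze_zero_norm (fun k => hp4 (ψ k) i) hψ0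
      have h3 := hz.add_const (q i)
      simpa using h3
    exact tendsto_nhds_unique h1 h2
  -- moment bound of the limit atoms
  have hmom : (∑ j ∈ P, (b j).1 * ‖xs j‖ ^ d) ≤ M := by
    have h1 : Tendsto (fun k => ∑ j ∈ P, lam (ψ k) j * ‖xx (ψ k) j‖ ^ d) atTop
        (𝓝 (∑ j ∈ P, (b j).1 * ‖xs j‖ ^ d)) :=
      tendsto_finset_sum _ fun j hj =>
        (hLamlim j).mul (((continuous_norm.pow d).tendsto _).comp (hxconv j hj))
    have h2 : Tendsto (fun k => M + 1/((ψ k : ℝ)+1)) atTop (𝓝 M) := by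
      have := tendsto_const_nhds (x := M) (f := atTop (α := ℕ)) |>.add hψ0
      simpa using this
    refine le_of_tendsto_of_tendsto' h1 h2 fun k => ?_
    calc (∑ j ∈ P, lam (ψ k) j * ‖xx (ψ k) j‖ ^ d)
        ≤ ∑ j : Fin K, lam (ψ k) j * ‖xx (ψ k) j‖ ^ d :=
          Finset.sum_le_sum_of_subset_of_nonneg (Finset.filter_subset _ _)
            (fun j _ _ => mul_nonneg (hp1 _ j) (pow_nonneg (norm_nonneg _) d))
      _ ≤ M + 1/((ψ k : ℝ)+1) := hp5 (ψ k)
  -- objective value of the limit atoms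
  have hφbound : ∀ x ∈ A, |φ x| ≤ C₀ * (1 + ‖x‖ ^ (d-1)) := fun x hx => by
    rw [abs_of_nonneg (hφ x hx).1]; exact (hφ x hx).2
  have hφstar : (∑ j ∈ P, (b j).1 * φ (xs j)) ≤ a := by
    have h1 := hsumlim φ hφc C₀ hC₀ hφbound
    have h2 : Tendsto (fun k => a + 2/((ψ k : ℝ)+1)) atTop (𝓝 a) := by
      have h3 : Tendsto (fun k : ℕ => 2/((ψ k : ℝ)+1)) atTop (𝓝 0) := by
        have := hψ0.const_mul (2:ℝ)
        simpa [mul_one_div, div_eq_mul_inv] using this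
      have := tendsto_const_nhds (x := a) (f := atTop (α := ℕ)) |>.add h3
      simpa using this
    exact le_of_tendsto_of_tendsto' h1 h2 fun k => hp6 (ψ k)
  have hxsA : ∀ j ∈ P, xs j ∈ A := fun j hj =>
    hAclosed.mem_of_tendsto (hxconv j hj) (Eventually.of_forall fun k => hp2 (ψ k) j)
  -- the limit measure
  set μs : Measure (EuclideanSpace ℝ (Fin n)) :=
    ∑ j ∈ P, ENNReal.ofReal ((b j).1) • Measure.dirac (xs j) with hμs
  have hintS : ∀ f : EuclideanSpace ℝ (Fin n) → ℝ, Continuous f → Integrable f μs := by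
    intro f hf
    rw [hμs, integrable_finset_sum_measure]
    exact fun j hj => (gmp_integrable_dirac f hf _).smul_measure ENNReal.ofReal_ne_top
  have hIS : ∀ f : EuclideanSpace ℝ (Fin n) → ℝ, Continuous f →
      ∫ x, f x ∂μs = ∑ j ∈ P, (b j).1 * f (xs j) := by
    intro f hf
    rw [hμs, integral_finset_sum_measure
      (fun j hj => (gmp_integrable_dirac f hf _).smul_measure ENNReal.ofReal_ne_top)]
    refine Finset.sum_congr rfl fun j hj => ?_
    rw [integral_smul_measure, integral_dirac, ENNReal.toReal_ofReal (hΛnn j), smul_eq_mul]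
  have hμsprob : IsProbabilityMeasure μs := by
    constructor
    rw [hμs, Measure.finset_sum_apply]
    simp only [Measure.smul_apply, measure_univ, smul_eq_mul, mul_one]
    rw [← ENNReal.ofReal_sum_of_nonneg (fun j _ => hΛnn j), hmass, ENNReal.ofReal_one]
  have hμsnull : μs {x | ¬ ∀ i, 0 ≤ x i} = 0 := by
    have hms : MeasurableSet {x : EuclideanSpace ℝ (Fin n) | ¬ ∀ i, 0 ≤ x i} := by
      have hEq : {x : EuclideanSpace ℝ (Fin n) | ¬ ∀ i, 0 ≤ x i} = Aᶜ := rfl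
      rw [hEq]; exact hAclosed.measurableSet.compl
    rw [hμs, Measure.finset_sum_apply]
    refine Finset.sum_eq_zero fun j hj => ?_
    rw [Measure.smul_apply, Measure.dirac_apply' _ hms]
    have hnot : xs j ∉ {x : EuclideanSpace ℝ (Fin n) | ¬ ∀ i, 0 ≤ x i} := by
      intro hcon
      exact hcon (hxsA j hj)
    rw [Set.indicator_of_notMem hnot]
    simp
  have hμsF : μs ∈ Fs := by
    rw [hFs]
    refine ⟨hμsprob, hμsnull, fun i => ⟨hintS (g i) (hgc i), ?_⟩,
      ⟨hintS _ (continuous_norm.pow d), ?_⟩⟩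
    · rw [hIS (g i) (hgc i)]; exact hgstar i
    · rw [hIS (fun x => ‖x‖ ^ d) (continuous_norm.pow d)]; exact hmom
  refine ⟨μs, hμsF, le_antisymm ?_ ?_⟩
  · rw [hIS φ hφc]
    exact hφstar
  · exact csInf_le hSbdd ⟨μs, hμsF, rfl⟩
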